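/- Let A be an L×J real matrix, y ∈ ℝ^L, f(x) = (1/2)‖y−Ax‖², ε₀ = min f, and ε > ε₀. Suppose the superiorized CG iteration (Algorithm S-CG) is run with perturbations (u_k) satisfying Σ‖u_k‖ < ∞, and at each iterate the per-step decrease 2f(x_k) − 2f(x_{k+1}) ≥ (1/(32c²))‖g_k‖² holds whenever ‖u_k‖ ≤ η_l‖g_k‖ (η_l = min{1/(4c²), η₂}, c = ‖A‖₂, g_k = Aᵀ(Ax_k − y)). Then there exists k with f(x_k) ≤ ε; i.e., the algorithm terminates. -/

import Mathlib

open RealInnerProductSpace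

set_option maxHeartbeats 1000000 in
theorem stmt14 {L J : ℕ}
    (A : EuclideanSpace ℝ (Fin J) →L[ℝ] EuclideanSpace ℝ (Fin L))
    (y : EuclideanSpace ℝ (Fin L))
    (f : EuclideanSpace ℝ (Fin J) → ℝ)
    (hf : ∀ x, f x = (1 / 2 : ℝ) * ‖y - A x‖ ^ 2)
    (c : ℝ) (hc : c = ‖A‖) (hcpos : 0 < c)
    (η₂ : ℝ) (hη₂ : 0 < η₂ ∧ (2 + c ^ 2 * η₂) * η₂ = 1 / (32 * c ^ 2))
    (ηl : ℝ) (hηl : ηl = min (1 / (4 * c ^ 2)) η₂)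
    (xLS : EuclideanSpace ℝ (Fin J)) (hmin : ∀ x, f xLS ≤ f x)
    (ε : ℝ) (hε : f xLS < ε)
    (x u : ℕ → EuclideanSpace ℝ (Fin J))
    (g : ℕ → EuclideanSpace ℝ (Fin J))
    (hg : ∀ k, g k = ContinuousLinearMap.adjoint A (A (x k) - y))
    (hsum : Summable fun k => ‖u k‖)
    (hdec : ∀ k, ‖u k‖ ≤ ηl * ‖g k‖ →
      (1 / (32 * c ^ 2)) * ‖g k‖ ^ 2 ≤ 2 * f (x k) - 2 * f (x (k + 1))) :
    ∃ k, f (x k) ≤ ε := by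
  by_contra hcon
  push_neg at hcon
  -- orthogonality of the residual at the minimizer
  have horth : ∀ w : EuclideanSpace ℝ (Fin J), ⟪y - A xLS, A w⟫ = 0 := by
    intro w
    by_cases hb : A w = 0
    · simp [hb]
    · set a := y - A xLS with ha
      set s : ℝ := ⟪a, A w⟫ with hs
      have hbpos : (0 : ℝ) < ‖A w‖ ^ 2 := pow_pos (norm_pos_iff.mpr hb) 2
      have key : ∀ t : ℝ, 0 ≤ -2 * (t * s) + t ^ 2 * ‖A w‖ ^ 2 := by
        intro t
        have h1 := hmin (xLS + t • w)
        rw [hf, hf] at h1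
        have h2 : y - A (xLS + t • w) = a - t • A w := by
          rw [map_add, map_smul, ha]; abel
        rw [h2] at h1
        have h3 : ‖a - t • A w‖ ^ 2 = ‖a‖ ^ 2 - 2 * (t * s) + t ^ 2 * ‖A w‖ ^ 2 := by
          rw [norm_sub_sq_real, real_inner_smul_right, norm_smul, mul_pow, Real.norm_eq_abs,
            sq_abs, ← hs]
        nlinarith [h1, h3]
      have hkey := key (s / ‖A w‖ ^ 2)
      have h4 : -2 * (s / ‖A w‖ ^ 2 * s) + (s / ‖A w‖ ^ 2) ^ 2 * ‖A w‖ ^ 2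
          = -(s ^ 2 / ‖A w‖ ^ 2) := by
        field_simp; ring
      rw [h4] at hkey
      have h5 : s ^ 2 / ‖A w‖ ^ 2 ≤ 0 := by linarith
      have h6 : s ^ 2 ≤ 0 := by
        have := mul_nonpos_of_nonpos_of_nonneg h5 hbpos.le
        calc s ^ 2 = s ^ 2 / ‖A w‖ ^ 2 * ‖A w‖ ^ 2 := by field_simp
          _ ≤ 0 := this
      have h7 : s ^ 2 = 0 := le_antisymm h6 (sq_nonneg s)
      exact pow_eq_zero_iff two_ne_zero |>.mp h7
  -- energy identity
  have hiden : ∀ z, 2 * f z = 2 * f xLS + ‖A (z - xLS)‖ ^ 2 := by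
    intro z
    rw [hf, hf]
    have h2 : y - A z = (y - A xLS) - A (z - xLS) := by
      rw [map_sub]; abel
    rw [h2, norm_sub_sq_real, horth]; ring
  -- the gradient in terms of z - xLS
  have hA0 : ContinuousLinearMap.adjoint A (y - A xLS) = 0 := by
    have h0 : ⟪ContinuousLinearMap.adjoint A (y - A xLS),
        ContinuousLinearMap.adjoint A (y - A xLS)⟫ = 0 := by
      rw [ContinuousLinearMap.adjoint_inner_left]
      exact horth _
    exact inner_self_eq_zero.mp h0
  have hgid : ∀ k, g k = ContinuousLinearMap.adjoint A (A (x k - xLS)) := by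
    intro k
    rw [hg]
    have h1 : A (x k) - y = A (x k - xLS) - (y - A xLS) := by
      rw [map_sub]; abel
    rw [h1, map_sub, hA0, sub_zero]
  -- A is not identically zero on the relevant directions
  have hAx0 : A (x 0 - xLS) ≠ 0 := by
    intro h0
    have := hiden (x 0)
    rw [h0, norm_zero] at this
    have := hcon 0
    nlinarith
  -- smallest singular value on the range
  set S : Set (EuclideanSpace ℝ (Fin L)) :=
    Metric.sphere 0 1 ∩ ((LinearMap.range (A : EuclideanSpace ℝ (Fin J) →ₗ[ℝ] EuclideanSpace ℝ (Fin L)) : Submodule ℝ (EuclideanSpace ℝ (Fin L))) :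
      Set (EuclideanSpace ℝ (Fin L))) with hS
  have hSclosed : IsClosed ((LinearMap.range (A : EuclideanSpace ℝ (Fin J) →ₗ[ℝ] EuclideanSpace ℝ (Fin L)) : Submodule ℝ (EuclideanSpace ℝ (Fin L))) :
      Set (EuclideanSpace ℝ (Fin L))) :=
    Submodule.closed_of_finiteDimensional _
  have hScompact : IsCompact S := (isCompact_sphere 0 1).inter_right hSclosed
  have hAx0n : ‖A (x 0 - xLS)‖ ≠ 0 := norm_ne_zero_iff.mpr hAx0
  have hSne : S.Nonempty := by
    refine ⟨‖A (x 0 - xLS)‖⁻¹ • A (x 0 - xLS), ?_, ?_⟩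
    · rw [Metric.mem_sphere, dist_zero_right, norm_smul, norm_inv, norm_norm,
        inv_mul_cancel₀ hAx0n]
    · exact Submodule.smul_mem _ _ ⟨x 0 - xLS, rfl⟩
  obtain ⟨w₁, hw₁S, hw₁⟩ := hScompact.exists_isMinOn hSne
    ((ContinuousLinearMap.adjoint A).continuous.norm.continuousOn)
  set θ' : ℝ := ‖ContinuousLinearMap.adjoint A w₁‖ with hθ'
  have hw₁norm : ‖w₁‖ = 1 := by
    have := hw₁S.1
    simpa using this
  have hθ'pos : 0 < θ' := by
    rcases (norm_nonneg (ContinuousLinearMap.adjoint A w₁)).lt_or_eq with h | h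
    · exact h
    · exfalso
      have hadj0 : ContinuousLinearMap.adjoint A w₁ = 0 := by
        exact norm_eq_zero.mp h.symm
      obtain ⟨z, hz⟩ := hw₁S.2
      have : ⟪w₁, w₁⟫ = 0 := by
        calc ⟪w₁, w₁⟫ = ⟪A z, w₁⟫ := by rw [show A z = w₁ from hz]
        _ = ⟪z, ContinuousLinearMap.adjoint A w₁⟫ := by
            rw [ContinuousLinearMap.adjoint_inner_right]
        _ = 0 := by rw [hadj0]; simp
      have : w₁ = 0 := inner_self_eq_zero.mp this
      rw [this, norm_zero] at hw₁norm
      norm_num at hw₁norm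
  have hbound : ∀ w, θ' * ‖A w‖ ≤ ‖ContinuousLinearMap.adjoint A (A w)‖ := by
    intro w
    by_cases hw : A w = 0
    · simp [hw]
    · have hn : (0 : ℝ) < ‖A w‖ := norm_pos_iff.mpr hw
      have hmem : ‖A w‖⁻¹ • A w ∈ S := by
        refine ⟨?_, Submodule.smul_mem _ _ ⟨w, rfl⟩⟩
        rw [Metric.mem_sphere, dist_zero_right, norm_smul, norm_inv, norm_norm,
          inv_mul_cancel₀ hn.ne']
      have h1 : θ' ≤ ‖ContinuousLinearMap.adjoint A (‖A w‖⁻¹ • A w)‖ := hw₁ hmem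
      rw [map_smul, norm_smul, norm_inv, norm_norm] at h1
      calc θ' * ‖A w‖ ≤ (‖A w‖⁻¹ * ‖ContinuousLinearMap.adjoint A (A w)‖) * ‖A w‖ := by
            exact mul_le_mul_of_nonneg_right h1 (norm_nonneg _)
        _ = ‖ContinuousLinearMap.adjoint A (A w)‖ := by
            field_simp
  -- uniform lower bound on ‖g k‖
  set ρ : ℝ := Real.sqrt (2 * ε - 2 * f xLS) with hρdef
  have hρpos : 0 < ρ := Real.sqrt_pos.mpr (by linarith)
  have hρ : ∀ k, ρ ≤ ‖A (x k - xLS)‖ := by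
    intro k
    have h1 : 2 * ε - 2 * f xLS ≤ ‖A (x k - xLS)‖ ^ 2 := by
      have := hiden (x k)
      have := hcon k
      nlinarith
    calc ρ ≤ Real.sqrt (‖A (x k - xLS)‖ ^ 2) := Real.sqrt_le_sqrt h1
      _ = ‖A (x k - xLS)‖ := by
          rw [Real.sqrt_sq (norm_nonneg _)]
  set θ : ℝ := θ' * ρ with hθdef
  have hθpos : 0 < θ := mul_pos hθ'pos hρpos
  have hθle : ∀ k, θ ≤ ‖g k‖ := by
    intro k
    calc θ = θ' * ρ := rfl
      _ ≤ θ' * ‖A (x k - xLS)‖ := by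
          exact mul_le_mul_of_nonneg_left (hρ k) hθ'pos.le
      _ ≤ ‖ContinuousLinearMap.adjoint A (A (x k - xLS))‖ := hbound _
      _ = ‖g k‖ := by rw [hgid k]
  have hηlpos : 0 < ηl := by
    rw [hηl]
    exact lt_min (by positivity) hη₂.1
  -- eventually the perturbations are small
  have htend : Filter.Tendsto (fun k => ‖u k‖) Filter.atTop (nhds 0) :=
    hsum.tendsto_atTop_zero
  have hev : ∀ᶠ k in Filter.atTop, ‖u k‖ < ηl * θ :=
    htend.eventually_lt_const (by positivity)
  obtain ⟨K, hK⟩ := Filter.eventually_atTop.mp hev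
  set δ : ℝ := (1 / (32 * c ^ 2)) * θ ^ 2 with hδdef
  have hδpos : 0 < δ := by positivity
  have hstep : ∀ k, K ≤ k → δ ≤ 2 * f (x k) - 2 * f (x (k + 1)) := by
    intro k hk
    have h1 := hθle k
    have h2 : ‖u k‖ ≤ ηl * ‖g k‖ :=
      le_trans (hK k hk).le (mul_le_mul_of_nonneg_left h1 hηlpos.le)
    have h3 := hdec k h2
    have h4 : δ ≤ (1 / (32 * c ^ 2)) * ‖g k‖ ^ 2 := by
      rw [hδdef]
      apply mul_le_mul_of_nonneg_left _ (by positivity)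
      nlinarith
    linarith
  have hiter : ∀ n : ℕ, 2 * f (x (K + n)) ≤ 2 * f (x K) - n * δ := by
    intro n
    induction n with
    | zero => simp
    | succ n ih =>
      have h1 := hstep (K + n) (Nat.le_add_right _ _)
      have h2 : K + (n + 1) = (K + n) + 1 := by omega
      rw [h2]
      push_cast
      linarith
  obtain ⟨n, hn⟩ := exists_nat_gt ((2 * f (x K) - 2 * ε) / δ)
  have hn' : 2 * f (x K) - 2 * ε < n * δ := by
    rw [div_lt_iff₀ hδpos] at hn
    linarith
  have h1 := hiter n
  have h2 := hcon (K + n)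
  linarith
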